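/- If A is a local Prüfer ring, then A/Z(A) is a Prüfer domain (equivalently, a valuation domain, since it is local). -/

import Mathlib

/-- A Prüfer ring: every finitely generated regular ideal is invertible
(as a submodule of the total ring of fractions). -/
def IsPruferRing (R : Type*) [CommRing R] : Prop :=
  ∀ I : Ideal R, I.FG → (∃ r ∈ I, r ∈ nonZeroDivisors R) →
    ∃ J : Submodule R (FractionRing R),
      Submodule.map (Algebra.linearMap R (FractionRing R)) I * J = 1

/-- In a local Prüfer ring, every f.g. regular ideal is principal. -/
lemma aux_principal {A : Type*} [CommRing A] [IsLocalRing A] (hA : IsPruferRing A)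
    (I : Ideal A) (hfg : I.FG) (hreg : ∃ r ∈ I, r ∈ nonZeroDivisors A) :
    I.IsPrincipal := by
  obtain ⟨J, hJ⟩ := hA I hfg hreg
  obtain ⟨r, hrI, hr⟩ := hreg
  have hfrac : IsFractional (nonZeroDivisors A) J := by
    refine ⟨r, hr, fun b hb => ?_⟩
    have : algebraMap A (FractionRing A) r * b ∈
        Submodule.map (Algebra.linearMap A (FractionRing A)) I * J :=
      Submodule.mul_mem_mul (Submodule.mem_map_of_mem hrI) hb
    rw [hJ] at this
    obtain ⟨y, hy⟩ := (Submodule.mem_one).mp this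
    exact ⟨y, by simpa [Algebra.smul_def] using hy⟩
  set J' : FractionalIdeal (nonZeroDivisors A) (FractionRing A) := ⟨J, hfrac⟩
  have hmul : (I : FractionalIdeal (nonZeroDivisors A) (FractionRing A)) * J' = 1 := by
    rw [← FractionalIdeal.coeToSubmodule_injective.eq_iff,
      FractionalIdeal.coe_mul, FractionalIdeal.coe_one, FractionalIdeal.coe_coeIdeal]
    exact hJ
  have hunit : IsUnit (I : FractionalIdeal (nonZeroDivisors A) (FractionRing A)) :=
    IsUnit.of_mul_eq_one _ hmul
  have hfin : {I : Ideal A | I.IsMaximal}.Finite := by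
    apply Set.Finite.subset (Set.finite_singleton (IsLocalRing.maximalIdeal A))
    intro m hm
    exact (IsLocalRing.eq_maximalIdeal hm)
  exact Ideal.IsPrincipal.of_finite_maximals_of_isUnit hfin hunit

theorem stmt16 {A : Type*} [CommRing A] [IsLocalRing A] (hA : IsPruferRing A)
    (p : Ideal A) (hp : ∀ a : A, a ∈ p ↔ a ∉ nonZeroDivisors A) :
    IsDomain (A ⧸ p) ∧ IsPruferRing (A ⧸ p) := by
  have hprime : p.IsPrime := by
    constructor
    · intro h
      have : (1 : A) ∈ p := h ▸ Submodule.mem_top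
      exact (hp 1).mp this (Submonoid.one_mem _)
    · intro a b hab
      by_contra h
      push_neg at h
      have ha : a ∈ nonZeroDivisors A := not_not.mp (fun h' => h.1 ((hp a).mpr h'))
      have hb : b ∈ nonZeroDivisors A := not_not.mp (fun h' => h.2 ((hp b).mpr h'))
      exact (hp (a * b)).mp hab (mul_mem ha hb)
  haveI := hprime
  have hdom : IsDomain (A ⧸ p) := Ideal.Quotient.isDomain p
  refine ⟨hdom, ?_⟩
  haveI := hdom
  classical
  intro Ibar hfg hreg
  obtain ⟨rbar, hrI, hrreg⟩ := hreg
  obtain ⟨s, hs⟩ := hfg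
  -- lift generators and the regular element
  choose lift hlift using Ideal.Quotient.mk_surjective (I := p)
  set I : Ideal A := Ideal.span (↑(s.image lift) ∪ {lift rbar})
  have hmapI : Ideal.map (Ideal.Quotient.mk p) I = Ibar := by
    rw [Ideal.map_span]
    have himg : (Ideal.Quotient.mk p) '' (↑(s.image lift) ∪ {lift rbar}) = ↑s ∪ {rbar} := by
      rw [Set.image_union, Set.image_singleton, hlift]
      congr 1
      ext x
      simp only [Finset.coe_image, Set.mem_image, Finset.mem_coe]
      constructor
      · rintro ⟨y, ⟨z, hz, rfl⟩, rfl⟩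
        rw [hlift]; exact hz
      · rintro hx
        exact ⟨lift x, ⟨x, hx, rfl⟩, hlift x⟩
    rw [himg, Ideal.span_union, hs]
    exact sup_eq_left.mpr ((Ideal.span_singleton_le_iff_mem _).mpr hrI)
  have hrmem : lift rbar ∈ I := Ideal.subset_span (Or.inr rfl)
  have hrregA : lift rbar ∈ nonZeroDivisors A := by
    by_contra h
    have : lift rbar ∈ p := (hp _).mpr h
    have : rbar = 0 := by rw [← hlift rbar]; exact (Ideal.Quotient.eq_zero_iff_mem).mpr this
    rw [this] at hrreg
    exact zero_notMem_nonZeroDivisors hrreg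
  have hIfg : I.FG := ⟨s.image lift ∪ {lift rbar}, by rw [Finset.coe_union, Finset.coe_singleton]⟩
  obtain ⟨a, ha⟩ := aux_principal hA I hIfg ⟨lift rbar, hrmem, hrregA⟩
  -- Ibar is generated by mk a
  have ha' : I = Ideal.span {a} := ha
  have hIbar : Ibar = Ideal.span {Ideal.Quotient.mk p a} := by
    rw [← hmapI, ha', Ideal.map_span, Set.image_singleton]
  have habar_ne : Ideal.Quotient.mk p a ≠ 0 := by
    intro h0
    rw [h0, Ideal.span_singleton_eq_bot.mpr rfl] at hIbar
    have : rbar = 0 := by simpa [hIbar] using hrI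
    rw [this] at hrreg
    exact zero_notMem_nonZeroDivisors hrreg
  -- invert in the fraction field
  set K := FractionRing (A ⧸ p)
  set x : K := algebraMap (A ⧸ p) K (Ideal.Quotient.mk p a)
  have hx : x ≠ 0 := by
    intro h
    exact habar_ne (IsFractionRing.injective (A ⧸ p) K (by simpa [x] using h))
  refine ⟨Submodule.span (A ⧸ p) {x⁻¹}, ?_⟩
  have hmapspan : Submodule.map (Algebra.linearMap (A ⧸ p) K) Ibar
      = Submodule.span (A ⧸ p) {x} := by
    rw [hIbar]
    rw [Ideal.span, Submodule.map_span, Set.image_singleton]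
    rfl
  rw [hmapspan, Submodule.span_mul_span, Set.singleton_mul_singleton,
    mul_inv_cancel₀ hx, ← Submodule.one_eq_span]
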